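/- Let T be an invertible continuous linear operator on a Fréchet space which is AP-hypercyclic. Then T^{-1} is AP-hypercyclic. -/

import Mathlib

open Filter Topology

def ContainsAPs (A : Set ℕ) : Prop :=
  ∀ m : ℕ, ∃ a k : ℕ, 1 ≤ a ∧ 1 ≤ k ∧ ∀ j ≤ m, a + j * k ∈ A

private lemma symm_pow_apply_pow_add {X : Type*} [AddCommGroup X] [Module ℝ X]
    [TopologicalSpace X] [IsTopologicalAddGroup X]
    (T : X ≃L[ℝ] X) (p q : ℕ) (x : X) :
    (T.symm ^ p) ((T ^ (p + q)) x) = (T ^ q) x := by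
  induction p with
  | zero => rw [pow_zero, Nat.zero_add]; rfl
  | succ p ih =>
    have h1 : T ^ (p + 1 + q) = (T ^ (p + q)) * T := by
      rw [← pow_succ]; congr 1; omega
    have h2 : T.symm ^ (p + 1) = T.symm ^ p * T.symm := pow_succ _ _
    have hmul : ∀ (f g : X ≃L[ℝ] X) (y : X), (f * g) y = f (g y) := fun _ _ _ => rfl
    rw [h1, h2, hmul, hmul]
    have : T.symm (T ((T ^ (p + q)) (T.symm x))) = (T ^ (p+q)) (T.symm x) :=
      T.symm_apply_apply _
    calc (T.symm ^ p) (T.symm ((T ^ (p + q)) (T x)))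
        = (T.symm ^ p) ((T ^ (p + q)) x) := by
          congr 1
          have : (T ^ (p + q)) (T x) = T ((T ^ (p + q)) x) := by
            have : (T ^ (p+q)) * T = T * (T ^ (p+q)) := by
              rw [← pow_succ, ← pow_succ']
            calc (T ^ (p + q)) (T x) = ((T ^ (p+q)) * T) x := rfl
              _ = (T * (T ^ (p+q))) x := by rw [this]
              _ = T ((T ^ (p + q)) x) := rfl
          rw [this, T.symm_apply_apply]
      _ = (T ^ q) x := ih

theorem inverse_of_AP_hypercyclic_is_AP_hypercyclic
    {X : Type*} [AddCommGroup X] [Module ℝ X] [UniformSpace X] [IsUniformAddGroup X]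
    [ContinuousSMul ℝ X] [LocallyConvexSpace ℝ X] [CompleteSpace X]
    [TopologicalSpace.MetrizableSpace X] [TopologicalSpace.SeparableSpace X]
    (T : X ≃L[ℝ] X)
    (h : ∃ x : X, ∀ U : Set X, IsOpen U → U.Nonempty →
        ContainsAPs {n : ℕ | (T ^ n) x ∈ U}) :
    ∃ x : X, ∀ U : Set X, IsOpen U → U.Nonempty →
        ContainsAPs {n : ℕ | (T.symm ^ n) x ∈ U} := by
  obtain ⟨x, hx⟩ := h
  -- the space is Baire and second countable
  haveI : (uniformity X).IsCountablyGenerated := by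
    rw [uniformity_eq_comap_nhds_zero X]
    exact Filter.comap.isCountablyGenerated _ _
  haveI : SecondCountableTopology X := UniformSpace.secondCountable_of_separable X
  -- the good open sets
  set G : Set X → ℕ → Set X := fun V m =>
    {z : X | ∃ a k : ℕ, 1 ≤ a ∧ 1 ≤ k ∧ ∀ j ≤ m, (T.symm ^ (a + j * k)) z ∈ V} with hG
  have hGopen : ∀ V : Set X, IsOpen V → ∀ m, IsOpen (G V m) := by
    intro V hV m
    have : G V m = ⋃ (a : ℕ) (k : ℕ) (_ : 1 ≤ a) (_ : 1 ≤ k),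
        ⋂ j ∈ Set.Iic m, (fun z => (T.symm ^ (a + j * k)) z) ⁻¹' V := by
      ext z
      simp only [hG, Set.mem_setOf_eq, Set.mem_iUnion, Set.mem_iInter, Set.mem_preimage,
        Set.mem_Iic]
      tauto
    rw [this]
    refine isOpen_iUnion fun a => isOpen_iUnion fun k => isOpen_iUnion fun _ =>
      isOpen_iUnion fun _ => (Set.finite_Iic m).isOpen_biInter fun j _ => ?_
    exact hV.preimage (T.symm ^ (a + j * k)).continuous
  -- density via transitivity
  have hGdense : ∀ V : Set X, IsOpen V → V.Nonempty → ∀ m, Dense (G V m) := by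
    intro V hV hVne m
    rw [dense_iff_inter_open]
    intro U hU hUne
    -- AP of T-orbit of x in V
    obtain ⟨a, k, ha, hk, hAP⟩ := hx V hV hVne m
    set c : ℕ := a + m * k + 1 with hc
    -- find b with T^(c+b) x ∈ U
    have hW : IsOpen ((fun y => (T ^ c) y) ⁻¹' U) := hU.preimage (T ^ c).continuous
    have hWne : ((fun y => (T ^ c) y) ⁻¹' U).Nonempty := by
      obtain ⟨u, hu⟩ := hUne
      exact ⟨(T ^ c).symm u, by simpa using hu⟩
    obtain ⟨b, k', hb, _, hAP'⟩ := hx _ hW hWne 0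
    have hbx : (T ^ (c + b)) x ∈ U := by
      have := hAP' 0 (le_refl 0)
      simp only [Nat.zero_mul, Nat.add_zero, Set.mem_setOf_eq, Set.mem_preimage] at this
      have : (T ^ c) ((T ^ b) x) ∈ U := this
      rwa [show (T ^ c) ((T ^ b) x) = (T ^ (c + b)) x from by
        rw [pow_add T c b]; rfl] at this
    refine ⟨(T ^ (c + b)) x, hbx, b + 1, k, Nat.le_add_left 1 b, hk, ?_⟩
    intro j hj
    have key : (b + 1 + j * k) + (a + (m - j) * k) = c + b := by
      have : j * k + (m - j) * k = m * k := by
        rw [← Nat.add_mul, Nat.add_sub_cancel' hj]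
      omega
    have := symm_pow_apply_pow_add T (b + 1 + j * k) (a + (m - j) * k) x
    rw [key] at this
    show (T.symm ^ (b + 1 + j * k)) ((T ^ (c + b)) x) ∈ V
    rw [this]
    exact hAP (m - j) (Nat.sub_le m j)
  -- Baire category argument over a countable basis
  obtain ⟨B, hBcount, hBempty, hBbasis⟩ := TopologicalSpace.exists_countable_basis X
  haveI : Countable ↥B := hBcount.to_subtype
  have hdense : Dense (⋂ p : ↥B × ℕ, G p.1.1 p.2) := by
    refine dense_iInter_of_isOpen (fun p => hGopen _ (hBbasis.isOpen p.1.2) p.2)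
      (fun p => hGdense _ (hBbasis.isOpen p.1.2) ?_ p.2)
    rcases Set.eq_empty_or_nonempty (p.1 : Set X) with he | hne
    · exact absurd (he ▸ p.1.2) hBempty
    · exact hne
  obtain ⟨y, hy⟩ := hdense.nonempty
  refine ⟨y, fun U hU hUne m => ?_⟩
  obtain ⟨u, hu⟩ := hUne
  obtain ⟨V, hVB, huV, hVU⟩ := hBbasis.exists_subset_of_mem_open hu hU
  have hyV : y ∈ G V m := by
    have := Set.mem_iInter.1 hy (⟨⟨V, hVB⟩, m⟩ : ↥B × ℕ)
    exact this
  obtain ⟨a, k, ha, hk, hAP⟩ := hyV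
  exact ⟨a, k, ha, hk, fun j hj => hVU (hAP j hj)⟩
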